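/- Let S > 1 be a real number and define f(x) = 1 - (1 - 1/S)^{S·x} for real x (real exponentiation). Then f(1/S) = 1/S, f'(1/S) = -(1 - 1/S)·ln((1 - 1/S)^S) < 1, and for every x > 1/S one has the strict tangent-line bound f(x) < 1/S + f'(1/S)·(x - 1/S). -/

import Mathlib

/-- Let `S > 1` be real and `f x = 1 - (1 - 1/S) ^ (S * x)` (real
exponentiation). Then `f (1/S) = 1/S`, the derivative of `f` at `1/S` equals
`d = -(1 - 1/S) * log ((1 - 1/S)^S)`, this derivative satisfies `d < 1`, and for every
`x > 1/S` one has the strict tangent-line bound `f x < 1/S + d * (x - 1/S)`. -/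
theorem tangent_line_bound (S : ℝ) (hS : 1 < S)
    (f : ℝ → ℝ) (hf : ∀ x, f x = 1 - (1 - 1 / S) ^ (S * x))
    (d : ℝ) (hd : d = -(1 - 1 / S) * Real.log ((1 - 1 / S) ^ S)) :
    f (1 / S) = 1 / S ∧ HasDerivAt f d (1 / S) ∧ d < 1 ∧
      ∀ x, 1 / S < x → f x < 1 / S + d * (x - 1 / S) := by
  have hS0 : (0 : ℝ) < S := lt_trans one_pos hS
  set b : ℝ := 1 - 1 / S with hbdef
  clear_value b
  have hb0 : 0 < b := by
    have : 1 / S < 1 := by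
      rw [div_lt_one hS0]; exact hS
    have h' : b = 1 - 1 / S := hbdef
    linarith
  have hb1 : b < 1 := by
    have : 0 < 1 / S := by positivity
    have h' : b = 1 - 1 / S := hbdef
    linarith
  set k : ℝ := Real.log b * S with hkdef
  clear_value k
  have hk0 : k < 0 := by
    rw [hkdef]; exact mul_neg_of_neg_of_pos (Real.log_neg hb0 hb1) hS0
  have hfe : ∀ x, f x = 1 - Real.exp (k * x) := by
    intro x
    rw [hf x, Real.rpow_def_of_pos hb0, hkdef]
    ring_nf
  have hfE : f = fun x => 1 - Real.exp (k * x) := funext hfe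
  have hSne : S ≠ 0 := ne_of_gt hS0
  have hbexp : Real.exp (k * (1 / S)) = b := by
    have : k * (1 / S) = Real.log b := by
      field_simp [hkdef]
      rw [hkdef]; ring
    rw [this, Real.exp_log hb0]
  have hone : 1 - b = 1 / S := by simp [hbdef]
  -- Part 1
  have h1 : f (1 / S) = 1 / S := by
    rw [hfe, hbexp]; linarith
  -- d in exp form
  have hd' : d = -(b * k) := by
    rw [hd, Real.log_rpow hb0, hkdef]; ring
  -- derivative lemma
  have hexpD : ∀ x : ℝ, HasDerivAt (fun y => Real.exp (k * y)) (Real.exp (k * x) * k) x := by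
    intro x
    have h := ((hasDerivAt_id x).const_mul k).exp
    simpa using h
  have hfD : ∀ x : ℝ, HasDerivAt f (-(Real.exp (k * x) * k)) x := by
    intro x
    rw [hfE]
    simpa using (hexpD x).const_sub 1
  -- Part 2
  have h2 : HasDerivAt f d (1 / S) := by
    have := hfD (1 / S)
    rw [hbexp] at this
    rwa [hd']
  -- Part 3: d < 1
  have hloginv : -Real.log b < b⁻¹ - 1 := by
    have hne : b⁻¹ ≠ 1 := by
      intro h
      have : b = 1 := by
        field_simp at h; simpa using h.symm
      linarith
    have := Real.log_lt_sub_one_of_pos (inv_pos.2 hb0) hne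
    rwa [Real.log_inv] at this
  have hbinv : b * b⁻¹ = 1 := mul_inv_cancel₀ (ne_of_gt hb0)
  have h3 : d < 1 := by
    have h4 : d = b * S * (-Real.log b) := by rw [hd', hkdef]; ring
    have h5 : b * S * (-Real.log b) < b * S * (b⁻¹ - 1) := by
      apply mul_lt_mul_of_pos_left hloginv
      positivity
    have h6 : b * S * (b⁻¹ - 1) = S * (1 - b) := by
      have : b * (b⁻¹ - 1) = 1 - b := by
        rw [mul_sub, hbinv]; ring
      calc b * S * (b⁻¹ - 1) = S * (b * (b⁻¹ - 1)) := by ring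
        _ = S * (1 - b) := by rw [this]
    have h7 : S * (1 - b) = 1 := by
      rw [hone]; field_simp
    linarith [h4 ▸ (h5.trans_eq (h6.trans h7))]
  -- Part 4
  refine ⟨h1, h2, h3, ?_⟩
  set g : ℝ → ℝ := fun x => 1 / S + d * (x - 1 / S) - f x with hgdef
  have hgD : ∀ x : ℝ, HasDerivAt g (d + Real.exp (k * x) * k) x := by
    intro x
    have hl : HasDerivAt (fun y : ℝ => 1 / S + d * (y - 1 / S)) d x := by
      have := (((hasDerivAt_id x).sub_const (1 / S)).const_mul d).const_add (1 / S)
      simpa using this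
    have := hl.sub (hfD x)
    rw [sub_neg_eq_add] at this
    rw [hgdef]; exact this
  have hgmono : StrictMonoOn g (Set.Ici (1 / S)) := by
    apply strictMonoOn_of_deriv_pos (convex_Ici _)
    · apply Continuous.continuousOn
      rw [hgdef, hfE]
      exact (continuous_const.add (continuous_const.mul
        (continuous_id.sub continuous_const))).sub
        (continuous_const.sub (Real.continuous_exp.comp
          (continuous_const.mul continuous_id)))
    · intro x hx
      rw [interior_Ici] at hx
      rw [(hgD x).deriv]
      have hkx : k * x < k * (1 / S) := by
        exact mul_lt_mul_of_neg_left hx hk0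
      have hexplt : Real.exp (k * x) < b := by
        rw [← hbexp]; exact Real.exp_lt_exp.2 hkx
      have : b * k < Real.exp (k * x) * k :=
        mul_lt_mul_of_neg_right hexplt hk0
      rw [hd']
      linarith
  intro x hx
  have := hgmono (Set.self_mem_Ici) (le_of_lt hx) hx
  have hg0 : g (1 / S) = 0 := by
    simp only [hgdef]
    rw [h1]; ring
  rw [hg0] at this
  simp only [hgdef] at this
  linarith
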